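/- Let k be a positive integer such that 2k-1 is an odd prime power. If (x, y, z) are positive integers with x^2 + (2k-1)^y = k^z, then z > y and z is odd, unless (x,y,z) = (k-1, 1, 2). -/

import Mathlib

private lemma aux_le_pow {q : ℕ} (hq : 3 ≤ q) : ∀ n : ℕ, n + 3 ≤ q ^ (n + 1) := by
  intro n
  induction n with
  | zero => simpa using hq
  | succ n ih =>
    have h1 : q ^ (n + 2) = q * q ^ (n + 1) := by ring
    have h2 : 1 ≤ q ^ (n + 1) := Nat.one_le_pow _ _ (by omega)
    calc n + 1 + 3 ≤ q ^ (n + 1) + 1 := by omega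
    _ ≤ 3 * q ^ (n + 1) := by omega
    _ ≤ q * q ^ (n + 1) := Nat.mul_le_mul_right _ hq
    _ = q ^ (n + 2) := h1.symm

private lemma emult_eq_fact {r n : ℕ} (hr : r.Prime) (hn : n ≠ 0) :
    emultiplicity r n = (n.factorization r : ℕ∞) := by
  rw [(Nat.finiteMultiplicity_iff.2 ⟨hr.ne_one, Nat.pos_of_ne_zero hn⟩).emultiplicity_eq_multiplicity,
    Nat.multiplicity_eq_factorization hr hn]

theorem stmt_1 (k x y z : ℕ) (hk : 0 < k)
    (hpp : ∃ p m : ℕ, p.Prime ∧ Odd p ∧ 0 < m ∧ 2 * k - 1 = p ^ m)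
    (hx : 0 < x) (hy : 0 < y) (hz : 0 < z)
    (heq : x ^ 2 + (2 * k - 1) ^ y = k ^ z) :
    (x = k - 1 ∧ y = 1 ∧ z = 2) ∨ (z > y ∧ Odd z) := by
  obtain ⟨p, m, hp, hpodd, hm, hq⟩ := hpp
  set q := 2 * k - 1 with hqdef
  have hp3 : 3 ≤ p := by
    have h2 := hp.two_le
    have := Nat.odd_iff.mp hpodd
    omega
  have hq3 : 3 ≤ q := by
    rw [hq]
    exact le_trans hp3 (Nat.le_self_pow (by omega) p)
  have hk2 : 2 ≤ k := by omega
  have hqk : q + 1 = 2 * k := by omega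
  have hqodd : Odd q := hq ▸ hpodd.pow
  -- z > y
  have hqy_pos : 0 < q ^ y := Nat.pow_pos (by omega)
  have hzy : y < z := by
    have hkz : k ^ y < k ^ z := by
      have h1 : k ^ y ≤ q ^ y := Nat.pow_le_pow_left (by omega) y
      have h2 : 0 < x ^ 2 := Nat.pow_pos hx
      omega
    exact (Nat.pow_lt_pow_iff_right hk2).mp hkz
  rcases Nat.even_or_odd z with hze | hzo
  swap
  · exact Or.inr ⟨hzy, hzo⟩
  obtain ⟨w, hw⟩ := hze
  have hw1 : 1 ≤ w := by omega
  have hkw : k ^ z = (k ^ w) ^ 2 := by rw [hw]; ring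
  have hkw_pos : 0 < k ^ w := Nat.pow_pos (by omega)
  have hxlt : x < k ^ w := by
    by_contra h
    push_neg at h
    have h2 : (k ^ w) ^ 2 ≤ x ^ 2 := Nat.pow_le_pow_left h 2
    omega
  set a := k ^ w - x with hadef
  have ha : a + x = k ^ w := by omega
  have hab : a * (a + 2 * x) = q ^ y := by
    have h1 : (a + x) ^ 2 = x ^ 2 + q ^ y := by rw [ha, ← hkw, ← heq]
    nlinarith [h1]
  have hqpm : q ^ y = p ^ (m * y) := by rw [hq, ← pow_mul]
  have hpk : ¬ p ∣ k := by
    intro h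
    have hpq : p ∣ q := hq ▸ dvd_pow_self p (by omega)
    have h2 : p ∣ 2 * k := Dvd.dvd.mul_left h 2
    have h3 : p ∣ 2 * k - q := Nat.dvd_sub h2 hpq
    have h4 : 2 * k - q = 1 := by omega
    rw [h4] at h3
    have := Nat.le_of_dvd one_pos h3
    omega
  have ha1 : a = 1 := by
    have hadvd : a ∣ p ^ (m * y) := ⟨a + 2 * x, by rw [← hqpm, ← hab]⟩
    obtain ⟨i, _, hai⟩ := (Nat.dvd_prime_pow hp).mp hadvd
    rcases Nat.eq_zero_or_pos i with hi0 | hi1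
    · rw [hai, hi0, pow_zero]
    exfalso
    have hpa : p ∣ a := hai ▸ dvd_pow_self p (by omega)
    have hbdvd : (a + 2 * x) ∣ p ^ (m * y) := ⟨a, by rw [← hqpm, ← hab]; ring⟩
    obtain ⟨j, _, hbj⟩ := (Nat.dvd_prime_pow hp).mp hbdvd
    have hapos : 0 < a := by
      rcases Nat.eq_zero_or_pos a with h0 | h1
      · rw [h0] at hab; simp at hab; omega
      · exact h1
    have hj1 : 1 ≤ j := by
      rcases Nat.eq_zero_or_pos j with h0 | h1
      · rw [h0, pow_zero] at hbj; omega
      · exact h1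
    have hpb : p ∣ a + 2 * x := hbj ▸ dvd_pow_self p (by omega)
    have hpsum : p ∣ 2 * k ^ w := by
      have : a + (a + 2 * x) = 2 * k ^ w := by omega
      exact this ▸ Nat.dvd_add hpa hpb
    rcases (Nat.Prime.dvd_mul hp).mp hpsum with h2 | hkw'
    · have := Nat.le_of_dvd (by norm_num) h2; omega
    · exact hpk (hp.dvd_of_dvd_pow hkw')
  -- key equation
  have hE : 2 * k ^ w = q ^ y + 1 := by
    rw [ha1] at hab ha
    omega
  -- case y = 1
  rcases eq_or_ne y 1 with hy1 | hy2
  · left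
    rw [hy1, pow_one] at hE
    have hkw1 : k ^ w = k ^ 1 := by rw [pow_one]; omega
    have hw1' : w = 1 := Nat.pow_right_injective hk2 hkw1
    refine ⟨?_, hy1, by omega⟩
    rw [ha1, hw1', pow_one] at ha
    omega
  have hy2' : 2 ≤ y := by omega
  have hw2 : 2 ≤ w := by omega
  rcases Nat.even_or_odd y with hye | hyo
  · -- y even: k = 2, contradiction mod 8
    exfalso
    obtain ⟨t, ht⟩ := hye
    have ht1 : 1 ≤ t := by omega
    obtain ⟨q', hq'⟩ : ∃ q', q = q' + 1 := ⟨q - 1, by omega⟩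
    have hq2 : q ^ 2 = 1 + k * (2 * q') := by
      have h1 : q' + 2 = 2 * k := by omega
      have h2 : q ^ 2 = q' * (q' + 2) + 1 := by rw [hq']; ring
      rw [h2, h1]; ring
    have hdvd1 : (1 : ℕ) ≡ q ^ 2 [MOD k] :=
      (Nat.modEq_iff_dvd' (Nat.one_le_pow _ _ (by omega))).mpr ⟨2 * q', by omega⟩
    have hdvd2 : (1 : ℕ) ≡ q ^ y [MOD k] := by
      have h2 := hdvd1.pow t
      simpa [← pow_mul, ht, one_pow, two_mul] using h2
    have hkdvd : k ∣ q ^ y + 1 := by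
      rw [← hE]
      exact Dvd.dvd.mul_left (dvd_pow_self k (by omega)) 2
    have hk2' : k = 2 := by
      obtain ⟨s, hs⟩ := (Nat.modEq_iff_dvd' (Nat.one_le_pow _ _ (by omega))).mp hdvd2
      have h1 : 1 ≤ q ^ y := Nat.one_le_pow _ _ (by omega)
      have h2 : k ∣ 2 := by
        have h3 := Nat.dvd_sub hkdvd ⟨s, hs⟩
        have h4 : q ^ y + 1 - (q ^ y - 1) = 2 := by omega
        rwa [h4] at h3
      have := Nat.le_of_dvd (by norm_num) h2
      omega
    have hq3' : q = 3 := by omega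
    have h9 : (1 : ℕ) ≡ 9 ^ t [MOD 8] := by simpa using (show (1:ℕ) ≡ 9 [MOD 8] by decide).pow t
    have h9y : q ^ y = 9 ^ t := by
      rw [hq3', ht, ← two_mul, pow_mul]
      norm_num
    have h8dvd : (8:ℕ) ∣ 2 * k ^ w := by
      rw [hk2']
      have h1 : (2 : ℕ) * 2 ^ w = 2 ^ (w + 1) := by ring
      rw [h1]
      calc (8:ℕ) = 2 ^ 3 := by norm_num
      _ ∣ 2 ^ (w + 1) := pow_dvd_pow 2 (by omega)
    obtain ⟨s9, hs9⟩ := (Nat.modEq_iff_dvd' (Nat.one_le_pow _ _ (by norm_num))).mp h9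
    obtain ⟨u8, hu8⟩ := h8dvd
    have h1 : 1 ≤ (9:ℕ) ^ t := Nat.one_le_pow _ _ (by norm_num)
    rw [h9y] at hE
    omega
  · -- y odd, y ≥ 3
    exfalso
    obtain ⟨t, hyt⟩ := hyo
    have hy3 : 3 ≤ y := by omega
    have ht1 : 1 ≤ t := by omega
    obtain ⟨d, hd⟩ := Nat.sub_dvd_pow_sub_pow (q ^ 2) 1 t
    set S := q * (q - 1) * d + 1 with hSdef
    have hq1 : 1 ≤ q := by omega
    have hq21 : 1 ≤ q ^ 2 := Nat.one_le_pow _ _ (by omega)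
    have hQ1 : 1 ≤ (q ^ 2) ^ t := Nat.one_le_pow _ _ (by omega)
    have hypow : q ^ y = (q ^ 2) ^ t * q := by rw [hyt, pow_succ, pow_mul]
    have hS : q ^ y + 1 = (q + 1) * S := by
      rw [hSdef]
      simp only [one_pow] at hd
      zify [hq1, hq21, hQ1] at hd ⊢
      have hypowZ : (q : ℤ) ^ y = ((q : ℤ) ^ 2) ^ t * (q : ℤ) := by exact_mod_cast hypow
      linear_combination hypowZ + (q : ℤ) * hd
    have hSodd : Odd S := by
      have he1 : Even (q - 1) := Nat.Odd.sub_odd hqodd odd_one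
      exact (he1.mul_left q).mul_right d |>.add_one
    have h1' : 2 * k ^ w = 2 * (k * S) := by
      rw [hE, hS, hqk]; ring
    have h2' : k ^ w = k * S := by omega
    have h3' : k ^ w = k * k ^ (w - 1) := by
      conv_lhs => rw [show w = (w - 1) + 1 by omega]
      rw [pow_succ]; ring
    have hSk : S = k ^ (w - 1) :=
      Nat.eq_of_mul_eq_mul_left (show 0 < k by omega) (by rw [← h2', h3'])
    have hkodd : Odd k := by
      have h4 : Odd (k ^ (w - 1)) := hSk ▸ hSodd
      rcases Nat.even_or_odd k with he | ho
      · exact absurd (Nat.even_pow.mpr ⟨he, by omega⟩) (Nat.not_even_iff_odd.mpr h4)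
      · exact ho
    have hdvy : k ^ (w - 1) ∣ y := by
      rw [← Nat.factorization_le_iff_dvd (pow_ne_zero _ (by omega)) (by omega)]
      rw [Finsupp.le_def]
      intro r
      rw [Nat.factorization_pow]
      simp only [Finsupp.smul_apply, smul_eq_mul]
      by_cases hrp : r.Prime
      swap
      · simp [Nat.factorization_eq_zero_of_not_prime _ hrp]
      by_cases hrk : r ∣ k
      swap
      · simp [Nat.factorization_eq_zero_of_not_dvd hrk]
      have hr2 : r ≠ 2 := by
        intro h
        exact (Nat.not_even_iff_odd.mpr hkodd) (even_iff_two_dvd.mpr (h ▸ hrk))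
      have hrodd : Odd r := hrp.eq_two_or_odd'.resolve_left hr2
      have hr1 : r ∣ q + 1 := hqk ▸ Dvd.dvd.mul_left hrk 2
      have hrq : ¬ r ∣ q := by
        intro h
        have h5 := Nat.dvd_sub hr1 h
        have h6 : q + 1 - q = 1 := by omega
        rw [h6] at h5
        have := Nat.le_of_dvd one_pos h5
        have := hrp.two_le
        omega
      have hr2' : ¬ r ∣ 2 := by
        intro h
        have := Nat.le_of_dvd (by norm_num) h
        have := hrp.two_le
        omega
      have hlte := Nat.emultiplicity_pow_add_pow hrp hrodd (x := q) (y := 1)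
        (by simpa using hr1) (by simpa using hrq) (show Odd y from ⟨t, hyt⟩)
      rw [one_pow] at hlte
      rw [emult_eq_fact hrp (show q ^ y + 1 ≠ 0 by omega),
        emult_eq_fact hrp (show q + 1 ≠ 0 by omega),
        emult_eq_fact hrp (show y ≠ 0 by omega)] at hlte
      have hlte' : (q ^ y + 1).factorization r
          = (q + 1).factorization r + y.factorization r := by exact_mod_cast hlte
      have hL : (q ^ y + 1).factorization r = w * k.factorization r := by
        rw [← hE, Nat.factorization_mul (by norm_num) (pow_ne_zero _ (by omega)),
          Nat.factorization_pow]
        simp [Nat.factorization_eq_zero_of_not_dvd hr2']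
      have hR : (q + 1).factorization r = k.factorization r := by
        rw [hqk, Nat.factorization_mul (by norm_num) (by omega)]
        simp [Nat.factorization_eq_zero_of_not_dvd hr2']
      rw [hL, hR] at hlte'
      have h6 : w * k.factorization r = (w - 1) * k.factorization r + k.factorization r := by
        conv_lhs => rw [show w = (w - 1) + 1 by omega]
        ring
      omega
    have hky : k ^ (w - 1) ≤ y := Nat.le_of_dvd (by omega) hdvy
    have hb1 : q + 1 ≤ q ^ 2 := by
      have hm1 : q * 3 ≤ q * q := Nat.mul_le_mul_left q hq3
      have hm2 : q ^ 2 = q * q := by ring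
      omega
    have hb2 : y ≤ q ^ (y - 2) := by
      have hb3 := aux_le_pow hq3 (y - 3)
      have hb4 : y - 3 + 1 = y - 2 := by omega
      rw [hb4] at hb3
      omega
    have hb5 : (q + 1) * y ≤ q ^ 2 * q ^ (y - 2) := Nat.mul_le_mul hb1 hb2
    have hb6 : q ^ 2 * q ^ (y - 2) = q ^ y := by
      rw [← pow_add]
      congr 1
      omega
    have hb7 : q ^ y + 1 = (q + 1) * k ^ (w - 1) := by rw [hS, hSk]
    have hb8 : (q + 1) * k ^ (w - 1) ≤ (q + 1) * y := Nat.mul_le_mul_left _ hky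
    omega
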